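/- For the biochemical control circuit with k - 1 = αk² (α = ∏αᵢ), the Jacobian satisfies det(J(x)) = (-1)ⁿ(α - g'(xₙ)); in particular det(J(x)) = 0 whenever xₙ = 0, and consequently the system is not contractive on ℝⁿ₊ with respect to any norm. -/

import Mathlib

open Finset

/-- The index `n-1` (the last coordinate) in `Fin n`. -/
def lastIdx (n : ℕ) (hn : 0 < n) : Fin n := ⟨n - 1, by omega⟩

/-- The nonlinearity `g(u) = (1+u)/(k+u)`. -/
noncomputable def gfun (k u : ℝ) : ℝ := (1 + u) / (k + u)

/-- The vector field of the biochemical control circuit. -/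
noncomputable def Ffield (n : ℕ) (hn : 0 < n) (k : ℝ) (α : Fin n → ℝ)
    (x : Fin n → ℝ) : Fin n → ℝ := fun i =>
  if (i : ℕ) = 0 then gfun k (x (lastIdx n hn)) - α i * x i
  else x ⟨(i : ℕ) - 1, by have := i.isLt; omega⟩ - α i * x i

/-- The Jacobian of the circuit: diagonal `-αᵢ`, subdiagonal `1`,
top-right entry `g'(xₙ) = (k-1)/(k+xₙ)²`. -/
noncomputable def Jmat (n : ℕ) (hn : 0 < n) (k : ℝ) (α : Fin n → ℝ)
    (x : Fin n → ℝ) : Matrix (Fin n) (Fin n) ℝ := fun i j =>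
  if i = j then -α i
  else if (i : ℕ) = (j : ℕ) + 1 then 1
  else if (i : ℕ) = 0 ∧ j = lastIdx n hn then (k - 1) / (k + x (lastIdx n hn)) ^ 2
  else 0

section aux

lemma det_aux (m : ℕ) (d : Fin (m + 2) → ℝ) (β : ℝ) :
    (Matrix.of fun i j : Fin (m + 2) => if i = j then d i else if (i:ℕ) = (j:ℕ) + 1 then (1:ℝ)
      else if (i:ℕ) = 0 ∧ (j:ℕ) = m + 1 then β else 0).det
    = (∏ i, d i) + (-1) ^ (m + 1) * β := by
  set A : Matrix (Fin (m+2)) (Fin (m+2)) ℝ :=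
    Matrix.of fun i j : Fin (m + 2) => if i = j then d i else if (i:ℕ) = (j:ℕ) + 1 then (1:ℝ)
      else if (i:ℕ) = 0 ∧ (j:ℕ) = m + 1 then β else 0 with hA
  have hlast : (Fin.last (m+1) : Fin (m+2)) = ⟨m+1, by omega⟩ := rfl
  rw [Matrix.det_succ_column A (Fin.last (m+1))]
  have h0ne : (0 : Fin (m+2)) ≠ Fin.last (m+1) := by
    simp [Fin.ext_iff]
  have hsum : ∀ i : Fin (m+2), i ∉ ({0, Fin.last (m+1)} : Finset (Fin (m+2))) →
      (-1 : ℝ) ^ ((i : ℕ) + (Fin.last (m+1) : ℕ)) * A i (Fin.last (m+1)) *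
        (A.submatrix i.succAbove (Fin.last (m+1)).succAbove).det = 0 := by
    intro i hi
    simp only [mem_insert, mem_singleton, not_or] at hi
    have h1 : A i (Fin.last (m+1)) = 0 := by
      have hi1 : (i:ℕ) ≠ 0 := fun h => hi.1 (Fin.ext h)
      have hi2 : (i:ℕ) ≠ m+1 := fun h => hi.2 (Fin.ext h)
      have hi3 : (i:ℕ) ≠ (m+1)+1 := by omega
      rw [hA]
      simp only [Matrix.of_apply, Fin.ext_iff, Fin.val_last]
      simp [hi1, hi2, hi3]
    rw [h1]; ring
  rw [← Finset.sum_subset (Finset.subset_univ ({0, Fin.last (m+1)} : Finset (Fin (m+2))))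
    (fun i _ hi => hsum i hi)]
  rw [Finset.sum_pair h0ne]
  have hm1 : A 0 (Fin.last (m+1)) = β := by
    rw [hA]
    simp only [Matrix.of_apply, Fin.ext_iff, Fin.val_last]
    simp
  have hm2 : A (Fin.last (m+1)) (Fin.last (m+1)) = d (Fin.last (m+1)) := by
    simp [hA]
  have hdet1 : (A.submatrix (Fin.succAbove 0) (Fin.succAbove (Fin.last (m+1)))).det = 1 := by
    rw [Matrix.det_of_upperTriangular]
    · rw [Finset.prod_eq_one]
      intro i _
      rw [hA]
      simp only [Fin.succAbove_zero, Fin.succAbove_last, Matrix.submatrix_apply, Matrix.of_apply,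
        Fin.ext_iff, Fin.val_succ, Fin.val_castSucc]
      simp
    · intro i j hij
      have hij' : (j:ℕ) < (i:ℕ) := hij
      simp only [hA, Fin.succAbove_zero, Fin.succAbove_last, Matrix.submatrix_apply,
        Matrix.of_apply, Fin.ext_iff, Fin.val_succ, Fin.coe_castSucc]
      have h1 : ¬ ((i:ℕ)+1 = (j:ℕ)) := by omega
      have h2 : ¬ ((i:ℕ)+1 = (j:ℕ)+1) := by omega
      have h3 : ¬ ((i:ℕ)+1 = 0) := by omega
      simp [h1, h2, h3]
      omega
  have hdet2 : (A.submatrix (Fin.succAbove (Fin.last (m+1))) (Fin.succAbove (Fin.last (m+1)))).det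
      = ∏ i : Fin (m+1), d i.castSucc := by
    rw [Matrix.det_of_lowerTriangular]
    · apply Finset.prod_congr rfl
      intro i _
      simp [hA, Fin.succAbove_last, Matrix.submatrix_apply]
    · intro i j hij
      have hij' : (i:ℕ) < (j:ℕ) := hij
      simp only [hA, Fin.succAbove_last, Matrix.submatrix_apply, Matrix.of_apply,
        Fin.ext_iff, Fin.coe_castSucc]
      have h1 : ¬ ((i:ℕ) = (j:ℕ)) := by omega
      have h2 : ¬ ((i:ℕ) = (j:ℕ)+1) := by omega
      have h3 : ¬ ((j:ℕ) = m+1) := by omega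
      simp [h1, h2, h3]
  rw [hm1, hm2, hdet1, hdet2]
  have hprod : ∏ i : Fin (m+2), d i = (∏ i : Fin (m+1), d i.castSucc) * d (Fin.last (m+1)) :=
    Fin.prod_univ_castSucc d
  have hval : ((0 : Fin (m+2)) : ℕ) = 0 := rfl
  have hval2 : ((Fin.last (m+1) : Fin (m+2)) : ℕ) = m+1 := rfl
  rw [hval, hval2, hprod]
  have hev : (-1 : ℝ) ^ ((m+1) + (m+1)) = 1 := Even.neg_one_pow ⟨m+1, by ring⟩
  rw [hev]
  ring

end aux

theorem part1_aux (m : ℕ) (k : ℝ) (hk : 1 < k) (α : Fin (m+2) → ℝ)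
    (x : Fin (m+2) → ℝ) :
    (Jmat (m+2) (by omega) k α x).det =
      (-1 : ℝ) ^ (m+2) * ((∏ i, α i) - (k - 1) / (k + x (lastIdx (m+2) (by omega))) ^ 2) := by
  have pf : 0 < m + 2 := by omega
  set β := (k - 1) / (k + x (lastIdx (m+2) pf)) ^ 2 with hβ
  have hlidx : lastIdx (m+2) pf = ⟨m+1, by omega⟩ := rfl
  have hJ : Jmat (m+2) pf k α x
      = Matrix.of (fun i j : Fin (m+2) => if i = j then (fun i => -α i) i
          else if (i:ℕ) = (j:ℕ)+1 then (1:ℝ)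
          else if (i:ℕ) = 0 ∧ (j:ℕ) = m+1 then β else 0) := by
    funext i j
    have : (j = lastIdx (m+2) pf) ↔ ((j:ℕ) = m+1) := by
      rw [hlidx, Fin.ext_iff]
    simp only [Jmat, Matrix.of_apply, this, hβ]
  rw [show Jmat (m+2) (by omega) k α x = Jmat (m+2) pf k α x from rfl, hJ,
    det_aux m (fun i => -α i) β]
  have hneg : (∏ i : Fin (m+2), -α i) = (-1:ℝ)^(m+2) * ∏ i, α i := by
    have h1 : ∏ i : Fin (m+2), -α i = ∏ i : Fin (m+2), (-1) * α i := by
      simp [neg_one_mul]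
    rw [h1, Finset.prod_mul_distrib, Finset.prod_const, Finset.card_univ, Fintype.card_fin]
  rw [hneg, pow_succ]
  ring

theorem part3_aux (m : ℕ) (k : ℝ) (hk : 1 < k)
    (α : Fin (m+2) → ℝ) (hα : ∀ i, 0 < α i)
    (hcond : k - 1 = (∏ i, α i) * k ^ 2)
    (sol : ℝ → (Fin (m+2) → ℝ) → (Fin (m+2) → ℝ))
    (hsol0 : ∀ a, (∀ i, 0 ≤ a i) → sol 0 a = a)
    (hode : ∀ a, (∀ i, 0 ≤ a i) → ∀ t : ℝ, 0 ≤ t →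
      HasDerivAt (fun s => sol s a) (Ffield (m+2) (by omega) k α (sol t a)) t)
    (N : (Fin (m+2) → ℝ) → ℝ)
    (hNpos : ∀ y, 0 ≤ N y) (hNeq : ∀ y, N y = 0 ↔ y = 0)
    (hNtri : ∀ y z, N (y + z) ≤ N y + N z) (hNsmul : ∀ (c : ℝ) y, N (c • y) = |c| * N y) :
    ¬ ∃ c : ℝ, 0 < c ∧
        ∀ t : ℝ, 0 ≤ t → ∀ a b : Fin (m+2) → ℝ, (∀ i, 0 ≤ a i) → (∀ i, 0 ≤ b i) →
          N (sol t a - sol t b) ≤ Real.exp (-c * t) * N (a - b) := by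
  rintro ⟨c, hc, hcontr⟩
  have pf : 0 < m + 2 := by omega
  have hk0 : (0:ℝ) < k := lt_trans one_pos hk
  have hk1 : (0:ℝ) < k - 1 := by linarith
  have hzero : N 0 = 0 := (hNeq 0).mpr rfl
  have hNneg : ∀ y : Fin (m+2) → ℝ, N (-y) = N y := by
    intro y
    have h : -y = (-1 : ℝ) • y := by funext i; simp
    rw [h, hNsmul]; simp
  set C : ℝ := ∑ i : Fin (m+2), N (Pi.single i (1:ℝ)) with hC
  have hNle : ∀ y : Fin (m+2) → ℝ, N y ≤ C * ‖y‖ := by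
    intro y
    have hy : y = ∑ i : Fin (m+2), (y i) • (Pi.single i (1:ℝ) : Fin (m+2) → ℝ) := by
      funext j
      simp [Pi.single_apply, Finset.sum_apply, mul_ite]
    calc N y = N (∑ i : Fin (m+2), (y i) • (Pi.single i (1:ℝ) : Fin (m+2) → ℝ)) := by rw [← hy]
      _ ≤ ∑ i : Fin (m+2), N ((y i) • (Pi.single i (1:ℝ) : Fin (m+2) → ℝ)) :=
          Finset.le_sum_of_subadditive N hzero.le hNtri _ _
      _ = ∑ i : Fin (m+2), |y i| * N (Pi.single i (1:ℝ)) := by simp [hNsmul]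
      _ ≤ ∑ i : Fin (m+2), ‖y‖ * N (Pi.single i (1:ℝ)) := by
          apply Finset.sum_le_sum
          intro i _
          exact mul_le_mul_of_nonneg_right (by simpa using norm_le_pi_norm y i) (hNpos _)
      _ = C * ‖y‖ := by rw [← Finset.mul_sum, mul_comm]
  -- key: contraction forces c * N (a-b) ≤ N (F a - F b)
  have key : ∀ a b : Fin (m+2) → ℝ, (∀ i, 0 ≤ a i) → (∀ i, 0 ≤ b i) →
      c * N (a - b) ≤ N (Ffield (m+2) pf k α a - Ffield (m+2) pf k α b) := by
    intro a b ha hb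
    set D := Ffield (m+2) pf k α a - Ffield (m+2) pf k α b with hD
    have hda := hode a ha 0 le_rfl
    have hdb := hode b hb 0 le_rfl
    rw [hsol0 a ha] at hda
    rw [hsol0 b hb] at hdb
    have hφ : HasDerivAt (fun s => sol s a - sol s b) D 0 := hda.sub hdb
    have hlil := hasDerivAt_iff_isLittleO.mp hφ
    have hlil' : (fun t => sol t a - sol t b - (a - b) - t • D) =o[nhds (0:ℝ)]
        (fun t : ℝ => t) := by
      simpa [hsol0 a ha, hsol0 b hb] using hlil
    have hRtend : Filter.Tendsto (fun t => ‖sol t a - sol t b - (a-b) - t • D‖ / t)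
        (nhdsWithin (0:ℝ) (Set.Ioi 0)) (nhds 0) :=
      (hlil'.norm_left.tendsto_div_nhds_zero).mono_left nhdsWithin_le_nhds
    have hexp : HasDerivAt (fun t : ℝ => 1 - Real.exp (-c * t)) c 0 := by
      have h1 : HasDerivAt (fun t : ℝ => -c * t) (-c) 0 := by
        simpa using (hasDerivAt_id (0:ℝ)).const_mul (-c)
      have h3 := (h1.exp).const_sub 1
      exact h3.congr_deriv (by simp)
    have hslope : Filter.Tendsto (fun t : ℝ => (1 - Real.exp (-c * t)) / t)
        (nhdsWithin (0:ℝ) (Set.Ioi 0)) (nhds c) := by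
      have h4 := (hasDerivAt_iff_tendsto_slope.mp hexp).mono_left
        (nhdsWithin_mono 0 (fun t (ht : t ∈ Set.Ioi (0:ℝ)) => ne_of_gt ht))
      refine h4.congr fun t => ?_
      simp [slope_def_field]
    have hmain : ∀ t : ℝ, 0 < t →
        (1 - Real.exp (-c * t)) / t * N (a - b)
          ≤ N D + C * (‖sol t a - sol t b - (a - b) - t • D‖ / t) := by
      intro t ht
      have hco := hcontr t ht.le a b ha hb
      set w := sol t a - sol t b with hw
      have h1 : N (a - b) ≤ N w + N (a - b - w) := by
        have h := hNtri w (a - b - w)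
        have e : w + (a - b - w) = a - b := by abel
        rwa [e] at h
      have h2 : N (a - b - w) ≤ N (w - (a - b) - t • D) + t * N D := by
        have e1 : a - b - w = -(w - (a - b) - t • D) + (-t) • D := by
          rw [neg_smul]; abel
        rw [e1]
        refine le_trans (hNtri _ _) ?_
        rw [hNneg, hNsmul, abs_neg, abs_of_pos ht]
      have h3 : N (w - (a - b) - t • D) ≤ C * ‖w - (a - b) - t • D‖ := hNle _
      have h4 : (1 - Real.exp (-c*t)) * N (a - b)
          ≤ t * N D + C * ‖w - (a-b) - t • D‖ := by linarith
      rw [div_mul_eq_mul_div, div_le_iff₀ ht]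
      have e2 : (N D + C * (‖w - (a-b) - t • D‖ / t)) * t
          = t * N D + C * ‖w - (a-b) - t • D‖ := by
        field_simp
      rw [e2]
      exact h4
    have hTl : Filter.Tendsto (fun t => (1 - Real.exp (-c*t)) / t * N (a - b))
        (nhdsWithin (0:ℝ) (Set.Ioi 0)) (nhds (c * N (a - b))) := hslope.mul_const _
    have hTr : Filter.Tendsto
        (fun t => N D + C * (‖sol t a - sol t b - (a-b) - t • D‖ / t))
        (nhdsWithin (0:ℝ) (Set.Ioi 0)) (nhds (N D + C * 0)) :=
      tendsto_const_nhds.add (hRtend.const_mul C)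
    have hfin := le_of_tendsto_of_tendsto hTl hTr ?_
    · simpa using hfin
    · filter_upwards [self_mem_nhdsWithin] with t ht
      exact hmain t ht
  -- the degenerate direction
  set v : Fin (m+2) → ℝ := fun i => ∏ j ∈ Finset.Ioi i, α j with hv
  have hvpos : ∀ i, 0 < v i := fun i => Finset.prod_pos (fun j _ => hα j)
  have hvlast : v ⟨m+1, by omega⟩ = 1 := by
    have h : Finset.Ioi (⟨m+1, by omega⟩ : Fin (m+2)) = ∅ := by
      ext j
      simp only [Finset.mem_Ioi, Finset.notMem_empty, iff_false, Fin.lt_def]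
      have := j.isLt
      omega
    simp [hv, h]
  have hvrec : ∀ i : Fin (m+2), (i:ℕ) ≠ 0 →
      v ⟨(i:ℕ)-1, by have := i.isLt; omega⟩ = α i * v i := by
    intro i hi
    have hIoi : Finset.Ioi (⟨(i:ℕ)-1, by have := i.isLt; omega⟩ : Fin (m+2))
        = insert i (Finset.Ioi i) := by
      ext j
      simp only [Finset.mem_Ioi, Finset.mem_insert, Fin.lt_def, Fin.ext_iff]
      omega
    show (∏ j ∈ Finset.Ioi _, α j) = _
    rw [hIoi, Finset.prod_insert Finset.notMem_Ioi_self]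
  have hv0 : α 0 * v 0 = ∏ i, α i := by
    have h : insert (0 : Fin (m+2)) (Finset.Ioi (0 : Fin (m+2))) = Finset.univ := by
      rw [Finset.Ioi_insert]
      ext j
      simp [Finset.mem_Ici, Fin.zero_le]
    calc α 0 * v 0 = ∏ j ∈ insert (0 : Fin (m+2)) (Finset.Ioi (0 : Fin (m+2))), α j :=
          (Finset.prod_insert Finset.notMem_Ioi_self).symm
      _ = ∏ i, α i := by rw [h]
  have hNv : 0 < N v := by
    rcases lt_or_eq_of_le (hNpos v) with h | h
    · exact h
    · exfalso
      have hv0' : v = 0 := (hNeq v).mp h.symm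
      have := hvlast
      rw [hv0'] at this
      simp at this
  set e0 : Fin (m+2) → ℝ := Pi.single 0 (1:ℝ) with he0
  have hNe0 : 0 < N e0 := by
    rcases lt_or_eq_of_le (hNpos e0) with h | h
    · exact h
    · exfalso
      have h' : e0 = 0 := (hNeq e0).mp h.symm
      have : e0 0 = 1 := Pi.single_eq_same 0 1
      rw [h'] at this
      simp at this
  set ε := c * N v * k^3 / (2 * (k-1) * N e0) with hεdef
  clear_value ε
  have hε : 0 < ε := by
    rw [hεdef]
    apply div_pos
    · positivity
    · positivity
  have ha : ∀ i, 0 ≤ (ε • v) i := by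
    intro i
    have := mul_pos hε (hvpos i)
    simpa [smul_eq_mul] using this.le
  have hb : ∀ i, 0 ≤ (0 : Fin (m+2) → ℝ) i := fun i => le_refl 0
  have hkey := key (ε • v) 0 ha hb
  set δ := gfun k ε - gfun k 0 - ε * ∏ i, α i with hδdef
  have hDeq : Ffield (m+2) pf k α (ε • v) - Ffield (m+2) pf k α 0 = δ • e0 := by
    funext i
    by_cases hi : (i:ℕ) = 0
    · have hi0 : i = (0 : Fin (m+2)) := Fin.ext hi
      subst hi0
      have h1 : (ε • v) (lastIdx (m+2) pf) = ε := by
        have hl : (lastIdx (m+2) pf) = ⟨m+1, by omega⟩ := rfl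
        rw [hl]
        simp [smul_eq_mul, hvlast]
      have h2 : (0 : Fin (m+2) → ℝ) (lastIdx (m+2) pf) = 0 := rfl
      simp only [Pi.sub_apply, Pi.smul_apply, smul_eq_mul, Ffield, h1, h2]
      norm_num [he0, Pi.single_eq_same]
      rw [hδdef, ← hv0]
      ring
    · have hine : i ≠ 0 := fun h => hi (by rw [h]; rfl)
      have hrec := hvrec i hi
      simp only [Pi.sub_apply, Pi.smul_apply, smul_eq_mul, Ffield, hi, if_false]
      rw [he0]
      rw [Pi.single_eq_of_ne hine]
      simp only [Pi.smul_apply, Pi.zero_apply, smul_eq_mul, mul_zero]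
      rw [hrec]
      ring
  rw [sub_zero, hDeq, hNsmul, hNsmul, abs_of_pos hε] at hkey
  -- hkey : c * (ε * N v) ≤ |δ| * N e0
  have hprodα : (∏ i, α i) = (k-1)/k^2 := by
    rw [hcond]
    exact (mul_div_cancel_right₀ _ (by positivity)).symm
  have hδval : δ = -(ε^2 * (k-1) / (k^2 * (k+ε))) := by
    rw [hδdef, hprodα]
    simp only [gfun]
    have h2 : k + ε ≠ 0 := by positivity
    field_simp
    ring
  have habs : |δ| = ε^2 * (k-1) / (k^2 * (k+ε)) := by
    rw [hδval, abs_neg, abs_of_nonneg]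
    exact div_nonneg (mul_nonneg (sq_nonneg ε) hk1.le) (by positivity)
  rw [habs] at hkey
  have hfrac : ε^2 * (k-1) / (k^2 * (k+ε)) ≤ ε^2 * (k-1) / (k^2 * k) := by
    gcongr
    linarith
  have hkey2 : c * (ε * N v) ≤ ε^2 * (k-1) / (k^2 * k) * N e0 := by
    calc c * (ε * N v) ≤ ε^2 * (k-1) / (k^2 * (k+ε)) * N e0 := hkey
      _ ≤ ε^2 * (k-1) / (k^2 * k) * N e0 :=
          mul_le_mul_of_nonneg_right hfrac (hNpos _)
  rw [div_mul_eq_mul_div, le_div_iff₀ (by positivity)] at hkey2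
  -- hkey2 : c * (ε * N v) * (k^2 * k) ≤ ε^2 * (k-1) * N e0
  have hrw : ε^2 * (k-1) * N e0 = ε * (c * N v * k^3 / 2) := by
    rw [hεdef]
    field_simp
  rw [hrw] at hkey2
  nlinarith [mul_pos (mul_pos (mul_pos hc hε) hNv) (pow_pos hk0 3), hkey2]

/-- For the circuit with `k - 1 = αk²` (`α = ∏αᵢ`), the Jacobian satisfies
`det J(x) = (-1)ⁿ (α - g'(xₙ))`; in particular `det J(x) = 0` when `xₙ = 0`, and
consequently the system is not contractive on `ℝⁿ₊` with respect to any norm. -/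
theorem stmt17 (n : ℕ) (hn : 2 ≤ n) (k : ℝ) (hk : 1 < k)
    (α : Fin n → ℝ) (hα : ∀ i, 0 < α i)
    (hcond : k - 1 = (∏ i, α i) * k ^ 2)
    (sol : ℝ → (Fin n → ℝ) → (Fin n → ℝ))
    (hsol0 : ∀ a, (∀ i, 0 ≤ a i) → sol 0 a = a)
    (hode : ∀ a, (∀ i, 0 ≤ a i) → ∀ t : ℝ, 0 ≤ t →
      HasDerivAt (fun s => sol s a) (Ffield n (by omega) k α (sol t a)) t)
    (hinv : ∀ a, (∀ i, 0 ≤ a i) → ∀ t : ℝ, 0 ≤ t → ∀ i, 0 ≤ sol t a i) :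
    (∀ x : Fin n → ℝ, (∀ i, 0 ≤ x i) →
      (Jmat n (by omega) k α x).det =
        (-1 : ℝ) ^ n * ((∏ i, α i) - (k - 1) / (k + x (lastIdx n (by omega))) ^ 2)) ∧
    (∀ x : Fin n → ℝ, (∀ i, 0 ≤ x i) → x (lastIdx n (by omega)) = 0 →
      (Jmat n (by omega) k α x).det = 0) ∧
    ∀ N : (Fin n → ℝ) → ℝ,
      (∀ y, 0 ≤ N y) → (∀ y, N y = 0 ↔ y = 0) →
      (∀ y z, N (y + z) ≤ N y + N z) → (∀ (c : ℝ) y, N (c • y) = |c| * N y) →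
      ¬ ∃ c : ℝ, 0 < c ∧
        ∀ t : ℝ, 0 ≤ t → ∀ a b : Fin n → ℝ, (∀ i, 0 ≤ a i) → (∀ i, 0 ≤ b i) →
          N (sol t a - sol t b) ≤ Real.exp (-c * t) * N (a - b) := by
  obtain ⟨m, rfl⟩ : ∃ m, n = m + 2 := ⟨n - 2, by omega⟩
  refine ⟨fun x _ => part1_aux m k hk α x, fun x hx hx0 => ?_, ?_⟩
  · rw [part1_aux m k hk α x, hx0, add_zero]
    have h2 : (k - 1) / k ^ 2 = ∏ i, α i := by
      rw [hcond]
      exact mul_div_cancel_right₀ _ (by positivity : (k:ℝ)^2 ≠ 0)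
    rw [h2, sub_self, mul_zero]
  · exact fun N h1 h2 h3 h4 =>
      part3_aux m k hk α hα hcond sol hsol0 hode N h1 h2 h3 h4
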